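/- All roots of the crossing polynomial M(Γ(t)) of a weighted signed graph Γ are real and nonnegative. -/

import Mathlib

open scoped Classical
open Polynomial

namespace SGPaper

/-- A weighted signed graph on `n` vertices, given by its symmetric hollow
matrix of edge weights (a nonzero entry `w i j` is the weight of the edge `ij`;
positive edges have positive weight, negative edges negative weight). -/
structure WSG (n : ℕ) where
  w : Matrix (Fin n) (Fin n) ℝ
  symm : w.IsSymm
  loopless : ∀ i, w i i = 0

variable {n : ℕ}

/-- The underlying simple graph. -/
def WSG.graph (Γ : WSG n) : SimpleGraph (Fin n) :=
  SimpleGraph.fromRel (fun i j => Γ.w i j ≠ 0)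

/-- The spanning subgraph of positive edges. -/
def WSG.posGraph (Γ : WSG n) : SimpleGraph (Fin n) :=
  SimpleGraph.fromRel (fun i j => 0 < Γ.w i j)

/-- The spanning subgraph of negative edges. -/
def WSG.negGraph (Γ : WSG n) : SimpleGraph (Fin n) :=
  SimpleGraph.fromRel (fun i j => Γ.w i j < 0)

/-- Number of connected components of a graph. -/
noncomputable def comps {V : Type*} (G : SimpleGraph V) : ℕ :=
  Nat.card G.ConnectedComponent

/-- Weighted Laplacian `L = A - D`. -/
def WSG.lap (Γ : WSG n) : Matrix (Fin n) (Fin n) ℝ :=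
  Γ.w - Matrix.diagonal (fun i => ∑ j, Γ.w i j)

theorem WSG.lap_isHermitian (Γ : WSG n) : Γ.lap.IsHermitian := by
  have h : Γ.lap.IsSymm := Γ.symm.sub (Matrix.isSymm_diagonal _)
  show Matrix.conjTranspose Γ.lap = Γ.lap
  refine Matrix.ext fun i j => ?_
  have h' := congrFun (congrFun h i) j
  rw [Matrix.transpose_apply] at h'
  rw [Matrix.conjTranspose_apply, star_trivial]
  exact h'

/-- Number of positive eigenvalues of the Laplacian. -/
noncomputable def WSG.nPos (Γ : WSG n) : ℕ :=
  (Finset.univ.filter fun i => 0 < Γ.lap_isHermitian.eigenvalues i).card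

/-- Number of negative eigenvalues of the Laplacian. -/
noncomputable def WSG.nNeg (Γ : WSG n) : ℕ :=
  (Finset.univ.filter fun i => Γ.lap_isHermitian.eigenvalues i < 0).card

/-- Multiplicity of `0` as an eigenvalue of the Laplacian. -/
noncomputable def WSG.nZero (Γ : WSG n) : ℕ :=
  (Finset.univ.filter fun i => Γ.lap_isHermitian.eigenvalues i = 0).card

/-- The Laplacian inertia `(n₊, n₋, n₀)`. -/
noncomputable def WSG.inertia (Γ : WSG n) : ℕ × ℕ × ℕ := (Γ.nPos, Γ.nNeg, Γ.nZero)

/-- The Laplacian of `Γ(t) = Γ₊ + tΓ₋` (the weights of the negative edges are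
multiplied by `t`), as a matrix of polynomials in `t = X`. -/
noncomputable def WSG.lapPoly (Γ : WSG n) : Matrix (Fin n) (Fin n) (Polynomial ℝ) :=
  let wt : Matrix (Fin n) (Fin n) (Polynomial ℝ) :=
    Matrix.of fun i j => C (max (Γ.w i j) 0) + X * C (min (Γ.w i j) 0)
  wt - Matrix.diagonal (fun i => ∑ j, wt i j)

/-- The crossing polynomial `M(Γ(t))`: up to the multiplicative factor
`(-1)^(c-1)/n` it is the coefficient of the degree-`c` term of the
characteristic polynomial of `L(Γ(t))`; equivalently it equals
`((-1)^(n-1)/n) · ∏_{i=c+1}^n λᵢ(t)`. -/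
noncomputable def WSG.cross (Γ : WSG n) : Polynomial ℝ :=
  C ((-1 : ℝ) ^ (comps Γ.graph - 1) / n) * (Γ.lapPoly.charpoly).coeff (comps Γ.graph)

/-- The weight of an edge, as a function on unordered pairs. -/
noncomputable def WSG.edgeWeight (Γ : WSG n) : Sym2 (Fin n) → ℝ :=
  Sym2.lift ⟨fun i j => Γ.w i j, fun i j => Γ.symm.apply j i⟩

/-- A maximal spanning forest of `Γ`: a set of `n - c` edges of `Γ` forming an
acyclic graph. -/
def WSG.IsMaxForest (Γ : WSG n) (F : Finset (Sym2 (Fin n))) : Prop :=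
  (↑F : Set (Sym2 (Fin n))) ⊆ Γ.graph.edgeSet ∧
    (SimpleGraph.fromEdgeSet (↑F : Set (Sym2 (Fin n)))).IsAcyclic ∧
    F.card = n - comps Γ.graph

/-- `aₖ = Σ_{F ∈ SFₖ(Γ)} |π(F)|`: the sum of the absolute values of the
products of the edge weights over all maximal spanning forests of `Γ` with
exactly `k` negative edges. -/
noncomputable def WSG.ak (Γ : WSG n) (k : ℕ) : ℝ :=
  ∑ F ∈ Finset.univ.filter (fun F : Finset (Sym2 (Fin n)) =>
      Γ.IsMaxForest F ∧ (F.filter fun e => Γ.edgeWeight e < 0).card = k),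
    |∏ e ∈ F, Γ.edgeWeight e|


/-! ### Auxiliary development -/

section Aux

open Matrix Complex

variable {n : ℕ}

/-- The Laplacian-type matrix `A - diag(row sums)` of a real matrix. -/
noncomputable def lapOf (A : Matrix (Fin n) (Fin n) ℝ) : Matrix (Fin n) (Fin n) ℝ :=
  A - Matrix.diagonal (fun i => ∑ j, A i j)

/-- Complexification of a real matrix. -/
noncomputable def cx (A : Matrix (Fin n) (Fin n) ℝ) : Matrix (Fin n) (Fin n) ℂ :=
  A.map (algebraMap ℝ ℂ)

/-- The quadratic form value. -/
noncomputable def Sval (A : Matrix (Fin n) (Fin n) ℝ) (x : Fin n → ℂ) : ℝ :=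
  ∑ i, ∑ j, A i j * Complex.normSq (x i - x j)

lemma swap_sum (A : Matrix (Fin n) (Fin n) ℝ) (hA : A.IsSymm) (f : Fin n → Fin n → ℂ) :
    ∑ i, ∑ j, (A i j : ℂ) * f i j = ∑ i, ∑ j, (A i j : ℂ) * f j i := by
  rw [Finset.sum_comm]
  refine Finset.sum_congr rfl fun i _ => Finset.sum_congr rfl fun j _ => ?_
  rw [show A j i = A i j from hA.apply i j]

lemma dot_lap_eq (A : Matrix (Fin n) (Fin n) ℝ) (x : Fin n → ℂ) :
    star x ⬝ᵥ (cx (lapOf A) *ᵥ x) =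
      (∑ i, ∑ j, (A i j : ℂ) * (starRingEnd ℂ (x i) * x j)) -
        ∑ i, ∑ j, (A i j : ℂ) * (starRingEnd ℂ (x i) * x i) := by
  simp only [cx, lapOf, dotProduct, mulVec, dotProduct, Matrix.map_apply, Matrix.sub_apply,
    Matrix.diagonal_apply, Pi.star_apply, map_sub]
  rw [← Finset.sum_sub_distrib]
  refine Finset.sum_congr rfl fun i _ => ?_
  rw [Finset.mul_sum]
  simp only [sub_mul, mul_sub, Finset.sum_sub_distrib]
  congr 1
  · refine Finset.sum_congr rfl fun j _ => ?_
    simp only [Complex.star_def, Complex.coe_algebraMap]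
    ring
  · rw [← Finset.sum_mul]
    simp only [apply_ite (algebraMap ℝ ℂ), map_zero, ite_mul, zero_mul, mul_ite, mul_zero,
      Finset.sum_ite_eq, Finset.mem_univ, if_true, Complex.star_def, Complex.coe_algebraMap]
    push_cast
    ring

lemma quad_identity (A : Matrix (Fin n) (Fin n) ℝ) (hA : A.IsSymm) (x : Fin n → ℂ) :
    2 * (star x ⬝ᵥ (cx (lapOf A) *ᵥ x)) =
      - ∑ i, ∑ j, (A i j : ℂ) * (Complex.normSq (x i - x j) : ℝ) := by
  have h1 := dot_lap_eq A x
  have h2 : star x ⬝ᵥ (cx (lapOf A) *ᵥ x) =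
      (∑ i, ∑ j, (A i j : ℂ) * (starRingEnd ℂ (x j) * x i)) -
        ∑ i, ∑ j, (A i j : ℂ) * (starRingEnd ℂ (x j) * x j) := by
    rw [h1, swap_sum A hA (fun i j => starRingEnd ℂ (x i) * x j),
      swap_sum A hA (fun i j => starRingEnd ℂ (x i) * x i)]
  rw [two_mul]
  nth_rewrite 2 [h2]
  rw [h1, sub_add_sub_comm]
  simp only [← Finset.sum_add_distrib]
  rw [← Finset.sum_sub_distrib]
  simp only [← Finset.sum_sub_distrib, ← Finset.sum_neg_distrib]
  refine Finset.sum_congr rfl fun i _ => Finset.sum_congr rfl fun j _ => ?_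
  rw [← Complex.mul_conj]
  simp only [map_sub]
  ring

lemma dot_lap_real (A : Matrix (Fin n) (Fin n) ℝ) (hA : A.IsSymm) (x : Fin n → ℂ) :
    star x ⬝ᵥ (cx (lapOf A) *ᵥ x) = ((-(Sval A x) / 2 : ℝ) : ℂ) := by
  have h := quad_identity A hA x
  have h2 : ((Sval A x : ℝ) : ℂ) =
      ∑ i, ∑ j, (A i j : ℂ) * (Complex.normSq (x i - x j) : ℝ) := by
    unfold Sval
    push_cast
    rfl
  push_cast
  linear_combination h / 2 + h2 / 2

lemma Sval_nonneg (A : Matrix (Fin n) (Fin n) ℝ) (hpos : ∀ i j, 0 ≤ A i j) (x : Fin n → ℂ) :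
    0 ≤ Sval A x :=
  Finset.sum_nonneg fun i _ => Finset.sum_nonneg fun j _ =>
    mul_nonneg (hpos i j) (Complex.normSq_nonneg _)

lemma Sval_neg (A : Matrix (Fin n) (Fin n) ℝ) (x : Fin n → ℂ) :
    Sval (-A) x = - Sval A x := by
  simp [Sval, ← Finset.sum_neg_distrib, neg_mul]

lemma eq_of_Sval_zero (A : Matrix (Fin n) (Fin n) ℝ) (hpos : ∀ i j, 0 ≤ A i j)
    (x : Fin n → ℂ) (h : Sval A x = 0) :
    ∀ i j, A i j ≠ 0 → x i = x j := by
  intro i j hij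
  have h1 : ∀ i ∈ Finset.univ, (0:ℝ) ≤ ∑ j, A i j * Complex.normSq (x i - x j) :=
    fun i _ => Finset.sum_nonneg fun j _ => mul_nonneg (hpos i j) (Complex.normSq_nonneg _)
  have h2 := (Finset.sum_eq_zero_iff_of_nonneg h1).1 h i (Finset.mem_univ i)
  have h3 := (Finset.sum_eq_zero_iff_of_nonneg
    (fun j _ => mul_nonneg (hpos i j) (Complex.normSq_nonneg _))).1 h2 j (Finset.mem_univ j)
  exact sub_eq_zero.1 (Complex.normSq_eq_zero.1 ((mul_eq_zero.1 h3).resolve_left hij))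

lemma lap_mulVec_eq_zero (A : Matrix (Fin n) (Fin n) ℝ) (x : Fin n → ℂ)
    (h : ∀ i j, A i j ≠ 0 → x i = x j) : cx (lapOf A) *ᵥ x = 0 := by
  funext i
  have key : ∀ j, (A i j : ℂ) * x j = (A i j : ℂ) * x i := by
    intro j
    by_cases hij : A i j = 0
    · simp [hij]
    · rw [h i j hij]
  simp only [cx, lapOf, mulVec, dotProduct, Matrix.map_apply, Matrix.sub_apply,
    Matrix.diagonal_apply, Pi.zero_apply, Complex.coe_algebraMap]
  push_cast [apply_ite (Complex.ofReal)]
  simp only [sub_mul, ite_mul, zero_mul, Finset.sum_sub_distrib, Finset.sum_ite_eq,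
    Finset.mem_univ, if_true]
  rw [Finset.sum_congr rfl (fun j _ => key j), ← Finset.sum_mul]
  ring

lemma dot_eq_zero_of_symm (A : Matrix (Fin n) (Fin n) ℝ) (hA : A.IsSymm) (y x : Fin n → ℂ)
    (hy : cx A *ᵥ y = 0) : star y ⬝ᵥ (cx A *ᵥ x) = 0 := by
  have hH : (cx A)ᴴ = cx A := by
    ext i j
    simp [cx, Matrix.conjTranspose_apply, hA.apply i j, Complex.coe_algebraMap,
      Complex.conj_ofReal]
  rw [Matrix.dotProduct_mulVec, ← hH, ← Matrix.star_mulVec, hy]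
  simp

/-- The submodule of vectors constant on connected components. -/
noncomputable def constSub (Γ : WSG n) : Submodule ℂ (Fin n → ℂ) where
  carrier := {x | ∀ i j, Γ.w i j ≠ 0 → x i = x j}
  add_mem' := fun {a b} ha hb i j h => by
    simp only [Pi.add_apply, ha i j h, hb i j h]
  zero_mem' := fun i j _ => rfl
  smul_mem' := fun c {x} hx i j h => by simp only [Pi.smul_apply, hx i j h]

lemma mem_constSub {Γ : WSG n} {x : Fin n → ℂ} :
    x ∈ constSub Γ ↔ ∀ i j, Γ.w i j ≠ 0 → x i = x j := Iff.rfl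

lemma walk_const {Γ : WSG n} {x : Fin n → ℂ} (hx : ∀ i j, Γ.w i j ≠ 0 → x i = x j)
    {u v : Fin n} (p : Γ.graph.Walk u v) : x u = x v := by
  induction p with
  | nil => rfl
  | @cons a b c h p ih =>
    rw [WSG.graph, SimpleGraph.fromRel_adj] at h
    rcases h with ⟨hne, h | h⟩
    · exact (hx _ _ h).trans ih
    · exact ((hx _ _ h).symm).trans ih

lemma finrank_constSub (Γ : WSG n) :
    Module.finrank ℂ (constSub Γ) = comps Γ.graph := by
  classical
  let Φ : (Γ.graph.ConnectedComponent → ℂ) →ₗ[ℂ] (Fin n → ℂ) :=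
    { toFun := fun f i => f (Γ.graph.connectedComponentMk i)
      map_add' := fun f g => rfl
      map_smul' := fun c f => rfl }
  have hinj : Function.Injective Φ := by
    intro f g h
    funext c
    obtain ⟨i, rfl⟩ := c.exists_rep
    exact congrFun h i
  have hrange : LinearMap.range Φ = constSub Γ := by
    apply le_antisymm
    · rintro x ⟨f, rfl⟩ i j hij
      by_cases hij' : i = j
      · rw [hij']
      · have hadj : Γ.graph.Adj i j := by
          rw [WSG.graph, SimpleGraph.fromRel_adj]
          exact ⟨hij', Or.inl hij⟩
        show f (Γ.graph.connectedComponentMk i) = f (Γ.graph.connectedComponentMk j)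
        rw [SimpleGraph.ConnectedComponent.connectedComponentMk_eq_of_adj hadj]
    · intro x hx
      exact ⟨SimpleGraph.ConnectedComponent.lift x (fun v w p _ => walk_const hx p),
        funext fun i => rfl⟩
  haveI : Fintype Γ.graph.ConnectedComponent := Fintype.ofFinite _
  have h1 := LinearMap.finrank_range_of_inj hinj
  rw [hrange] at h1
  rw [h1, Module.finrank_fintype_fun_eq_card, comps, Nat.card_eq_fintype_card]

/-- The positive part of the weight matrix. -/
noncomputable def Ppart (Γ : WSG n) : Matrix (Fin n) (Fin n) ℝ :=
  Matrix.of fun i j => max (Γ.w i j) 0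

/-- The negative part of the weight matrix. -/
noncomputable def Npart (Γ : WSG n) : Matrix (Fin n) (Fin n) ℝ :=
  Matrix.of fun i j => min (Γ.w i j) 0

lemma Ppart_symm (Γ : WSG n) : (Ppart Γ).IsSymm := by
  ext i j
  simp only [Ppart, Matrix.transpose_apply, Matrix.of_apply, Γ.symm.apply i j]

lemma Npart_symm (Γ : WSG n) : (Npart Γ).IsSymm := by
  ext i j
  simp only [Npart, Matrix.transpose_apply, Matrix.of_apply, Γ.symm.apply i j]

lemma lapOf_symm {A : Matrix (Fin n) (Fin n) ℝ} (hA : A.IsSymm) : (lapOf A).IsSymm :=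
  hA.sub (Matrix.isSymm_diagonal _)

/-- The complex matrix `L(Γ(z)) = L₊ + z L₋`. -/
noncomputable def Mz (Γ : WSG n) (z : ℂ) : Matrix (Fin n) (Fin n) ℂ :=
  cx (lapOf (Ppart Γ)) + z • cx (lapOf (Npart Γ))

lemma lapPoly_map (Γ : WSG n) (z : ℂ) :
    Γ.lapPoly.map (((aeval z : Polynomial ℝ →ₐ[ℝ] ℂ) : Polynomial ℝ →+* ℂ) :
      Polynomial ℝ → ℂ) = Mz Γ z := by
  ext i j
  simp only [WSG.lapPoly, Mz, cx, lapOf, Ppart, Npart, Matrix.map_apply, Matrix.sub_apply,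
    Matrix.add_apply, Matrix.smul_apply, Matrix.diagonal_apply, Matrix.of_apply,
    AlgHom.coe_toRingHom, map_sub, map_add, _root_.map_mul, aeval_X, aeval_C,
    apply_ite (aeval z : Polynomial ℝ →ₐ[ℝ] ℂ), map_zero, map_sum,
    Complex.coe_algebraMap, smul_eq_mul]
  by_cases h : i = j
  · subst h
    simp only [if_pos rfl]
    push_cast
    simp only [Finset.sum_add_distrib, ← Finset.mul_sum]
    ring
  · simp only [if_neg h]
    ring

lemma Ppart_mulVec_eq_zero {Γ : WSG n} {x : Fin n → ℂ} (hx : x ∈ constSub Γ) :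
    cx (lapOf (Ppart Γ)) *ᵥ x = 0 := by
  refine lap_mulVec_eq_zero _ _ fun i j h => hx i j fun hw => h ?_
  simp [Ppart, hw]

lemma Npart_mulVec_eq_zero {Γ : WSG n} {x : Fin n → ℂ} (hx : x ∈ constSub Γ) :
    cx (lapOf (Npart Γ)) *ᵥ x = 0 := by
  refine lap_mulVec_eq_zero _ _ fun i j h => hx i j fun hw => h ?_
  simp [Npart, hw]

lemma mulVec_eq_zero_of_mem {Γ : WSG n} (z : ℂ) {x : Fin n → ℂ} (hx : x ∈ constSub Γ) :
    Mz Γ z *ᵥ x = 0 := by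
  rw [Mz, Matrix.add_mulVec, Matrix.smul_mulVec, Ppart_mulVec_eq_zero hx,
    Npart_mulVec_eq_zero hx]
  simp

lemma mem_of_mulVec_eq_zero {Γ : WSG n} {z : ℂ}
    (hnot : ¬ ∃ t : ℝ, 0 ≤ t ∧ (t : ℂ) = z) {x : Fin n → ℂ}
    (hx0 : Mz Γ z *ᵥ x = 0) : x ∈ constSub Γ := by
  have hPpos : ∀ i j, 0 ≤ Ppart Γ i j := fun i j => le_max_right _ _
  have hNneg : ∀ i j, 0 ≤ (-(Npart Γ)) i j := fun i j => by
    simp only [Matrix.neg_apply, Npart, Matrix.of_apply, neg_nonneg]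
    exact min_le_right _ _
  set a : ℝ := -(Sval (Ppart Γ) x) / 2 with ha_def
  set b : ℝ := -(Sval (Npart Γ) x) / 2 with hb_def
  have hab : (a : ℂ) + z * (b : ℂ) = 0 := by
    have h1 : star x ⬝ᵥ (Mz Γ z *ᵥ x) = (a:ℂ) + z * (b:ℂ) := by
      rw [Mz, Matrix.add_mulVec, Matrix.smul_mulVec, dotProduct_add,
        dotProduct_smul, dot_lap_real _ (Ppart_symm Γ) x, dot_lap_real _ (Npart_symm Γ) x,
        smul_eq_mul]
    rw [← h1, hx0]
    simp
  have ha : a ≤ 0 := by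
    have := Sval_nonneg _ hPpos x
    rw [ha_def]
    linarith
  have hb : 0 ≤ b := by
    have h2 := Sval_nonneg _ hNneg x
    rw [Sval_neg] at h2
    rw [hb_def]
    linarith
  by_cases hb0 : b = 0
  · have hSN : Sval (Npart Γ) x = 0 := by
      rw [hb_def] at hb0
      linarith
    have hcN : ∀ i j, Npart Γ i j ≠ 0 → x i = x j := by
      intro i j h
      refine eq_of_Sval_zero (-(Npart Γ)) hNneg x ?_ i j ?_
      · rw [Sval_neg, hSN, neg_zero]
      · simpa using h
    have hNx : cx (lapOf (Npart Γ)) *ᵥ x = 0 := lap_mulVec_eq_zero _ _ hcN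
    have hPx : cx (lapOf (Ppart Γ)) *ᵥ x = 0 := by
      have h3 := hx0
      rw [Mz, Matrix.add_mulVec, Matrix.smul_mulVec, hNx] at h3
      simpa using h3
    have ha0 : ((a : ℝ) : ℂ) = 0 := by
      rw [← dot_lap_real _ (Ppart_symm Γ) x, hPx]
      simp
    have hSP : Sval (Ppart Γ) x = 0 := by
      have : a = 0 := by exact_mod_cast ha0
      rw [ha_def] at this
      linarith
    have hcP : ∀ i j, Ppart Γ i j ≠ 0 → x i = x j := eq_of_Sval_zero _ hPpos x hSP
    intro i j hw
    rcases lt_trichotomy (Γ.w i j) 0 with h | h | h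
    · refine hcN i j ?_
      simp only [Npart, Matrix.of_apply]
      rw [min_eq_left h.le]
      exact h.ne
    · exact absurd h hw
    · refine hcP i j ?_
      simp only [Ppart, Matrix.of_apply]
      rw [max_eq_left h.le]
      exact h.ne'
  · exfalso
    apply hnot
    have hbC : ((b : ℝ) : ℂ) ≠ 0 := by exact_mod_cast hb0
    refine ⟨-a / b, div_nonneg (neg_nonneg.2 ha) hb, ?_⟩
    push_cast
    field_simp
    linear_combination -hab

lemma vec_eq_zero_of_dot {y : Fin n → ℂ} (h : star y ⬝ᵥ y = 0) : y = 0 := by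
  have h2 : ∑ i, Complex.normSq (y i) = 0 := by
    have h3 : ((∑ i, Complex.normSq (y i) : ℝ) : ℂ) = star y ⬝ᵥ y := by
      push_cast
      simp only [dotProduct, Pi.star_apply, Complex.star_def]
      exact Finset.sum_congr rfl fun i _ => (Complex.normSq_eq_conj_mul_self (z := y i))
    rw [h] at h3
    exact_mod_cast h3
  funext i
  have h4 := (Finset.sum_eq_zero_iff_of_nonneg
    (fun i _ => Complex.normSq_nonneg (y i))).1 h2 i (Finset.mem_univ i)
  exact Complex.normSq_eq_zero.1 h4

lemma ker_sq {Γ : WSG n} {z : ℂ} (hnot : ¬ ∃ t : ℝ, 0 ≤ t ∧ (t : ℂ) = z)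
    {x : Fin n → ℂ} (h : Mz Γ z *ᵥ (Mz Γ z *ᵥ x) = 0) : Mz Γ z *ᵥ x = 0 := by
  set y := Mz Γ z *ᵥ x with hy
  have hmem : y ∈ constSub Γ := mem_of_mulVec_eq_zero hnot h
  have hdot : star y ⬝ᵥ y = 0 := by
    nth_rewrite 2 [hy]
    rw [Mz, Matrix.add_mulVec, Matrix.smul_mulVec, dotProduct_add, dotProduct_smul,
      dot_eq_zero_of_symm _ (lapOf_symm (Ppart_symm Γ)) _ _ (Ppart_mulVec_eq_zero hmem),
      dot_eq_zero_of_symm _ (lapOf_symm (Npart_symm Γ)) _ _ (Npart_mulVec_eq_zero hmem)]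
    simp
  exact vec_eq_zero_of_dot hdot

end Aux


open Matrix Complex in
/-- All roots of the crossing polynomial `M(Γ(t))` are real and nonnegative. -/
theorem cross_roots_real_nonneg {n : ℕ} (hn : 0 < n) (Γ : WSG n) (z : ℂ)
    (hz : (Γ.cross.map (algebraMap ℝ ℂ)).IsRoot z) :
    ∃ t : ℝ, 0 ≤ t ∧ (t : ℂ) = z := by
  by_contra hnot
  set c := comps Γ.graph with hc
  -- From the root hypothesis, the relevant charpoly coefficient vanishes.
  have hzero : (Mz Γ z).charpoly.coeff c = 0 := by
    have h1 : Polynomial.aeval z Γ.cross = 0 := by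
      have h0 := hz
      rwa [Polynomial.IsRoot, Polynomial.eval_map, ← Polynomial.aeval_def] at h0
    rw [WSG.cross, _root_.map_mul, Polynomial.aeval_C] at h1
    have hk : (algebraMap ℝ ℂ) ((-1 : ℝ) ^ (c - 1) / n) ≠ 0 := by
      have : ((-1 : ℝ) ^ (c - 1) / n) ≠ 0 :=
        div_ne_zero (pow_ne_zero _ (by norm_num)) (Nat.cast_ne_zero.2 hn.ne')
      simpa using this
    have h2 : Polynomial.aeval z (Γ.lapPoly.charpoly.coeff c) = 0 :=
      (mul_eq_zero.1 h1).resolve_left hk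
    have h3 : (Mz Γ z).charpoly =
        Γ.lapPoly.charpoly.map ((aeval z : Polynomial ℝ →ₐ[ℝ] ℂ) : Polynomial ℝ →+* ℂ) := by
      rw [← Matrix.charpoly_map, lapPoly_map]
    rw [h3, Polynomial.coeff_map]
    exact h2
  -- Linear-algebraic analysis of `Mz`.
  let φ : Module.End ℂ (Fin n → ℂ) := Matrix.toLin' (Mz Γ z)
  have hφ : ∀ x, φ x = Mz Γ z *ᵥ x := fun x => Matrix.toLin'_apply _ _
  have hker : LinearMap.ker φ = constSub Γ := by
    ext x
    rw [LinearMap.mem_ker, hφ]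
    exact ⟨fun h => mem_of_mulVec_eq_zero hnot h, fun h => mulVec_eq_zero_of_mem z h⟩
  have hgen : φ.maxGenEigenspace 0 = LinearMap.ker φ := by
    apply le_antisymm
    · intro x hx
      rw [Module.End.mem_maxGenEigenspace] at hx
      obtain ⟨k, hk⟩ := hx
      simp only [zero_smul, sub_zero] at hk
      rw [LinearMap.mem_ker]
      clear hzero
      induction k generalizing x with
      | zero =>
        simp only [pow_zero, Module.End.one_apply] at hk
        rw [hk]
        simp
      | succ k ih =>
        rw [pow_succ, Module.End.mul_apply] at hk
        have h5 : φ (φ x) = 0 := ih hk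
        rw [hφ] at h5 ⊢
        rw [hφ] at h5
        exact ker_sq hnot h5
    · intro x hx
      rw [Module.End.mem_maxGenEigenspace]
      exact ⟨1, by simpa using (LinearMap.mem_ker.1 hx)⟩
  have htd : (Mz Γ z).charpoly.natTrailingDegree = c := by
    have h4 : φ.charpoly = (Mz Γ z).charpoly := by
      rw [← LinearMap.charpoly_toMatrix φ (Pi.basisFun ℂ (Fin n)),
        LinearMap.toMatrix_eq_toMatrix']
      congr 1
      exact LinearMap.toMatrix'_toLin' _
    rw [← h4, ← LinearMap.finrank_maxGenEigenspace_zero_eq, hgen, hker, finrank_constSub]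
  have hne : (Mz Γ z).charpoly.coeff c ≠ 0 := by
    rw [← htd]
    intro h
    exact (Matrix.charpoly_monic (Mz Γ z)).ne_zero (Polynomial.trailingCoeff_eq_zero.1 h)
  exact hne hzero

end SGPaper
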